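/- arXiv:1706.06895 — 2 statements merged into one kernel-verified Lean document; each statement's English description precedes it below -/
import Mathlib

section
/- With the notation of the piecewise affine interpolated form a_Λ: for all t, s ∈ [0,T] with |t−s| > 2|Λ| and all u,v ∈ V, |a_Λ(t;u,v) − a_Λ(s;u,v)| ≤ 2ω(2|t−s|)‖u‖‖v‖, where ω is extended to [0,2T] by ω(t) = ω(T) for t ≥ T. -/
open Set MeasureTheory intervalIntegral

/-- For the piecewise affine interpolation `a_Λ` of interval averages over a uniform
subdivision of mesh `δ`: for all `t, s ∈ [0,T]` with `|t − s| > 2δ`,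
`|a_Λ(t;u,v) − a_Λ(s;u,v)| ≤ 2ω(2|t−s|)‖u‖‖v‖`. -/
theorem stmt8 {V : Type*} [NormedAddCommGroup V] [NormedSpace ℂ V]
    (T δ : ℝ) (hT : 0 < T) (hδ : 0 < δ) (n : ℕ)
    (lam : ℕ → ℝ) (hlam0 : lam 0 = 0) (hlamT : lam (n + 1) = T)
    (hunif : ∀ k, lam (k + 1) - lam k = δ)
    (a : ℝ → V → V → ℂ)
    (haint : ∀ k (u v : V), IntervalIntegrable (fun r => a r u v) volume (lam k) (lam (k + 1)))
    (ω : ℝ → ℝ) (hmono : Monotone ω)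
    (hω : ∀ t s (u v : V), ‖a t u v - a s u v‖ ≤ ω |t - s| * ‖u‖ * ‖v‖)
    (aK : ℕ → V → V → ℂ)
    (haK : ∀ k (u v : V), aK k u v = (δ : ℂ)⁻¹ * ∫ r in lam k..lam (k + 1), a r u v)
    (aΛ : ℝ → V → V → ℂ)
    (haΛ : ∀ k, ∀ t ∈ Icc (lam k) (lam (k + 1)), ∀ u v : V,
      aΛ t u v = (((lam (k + 1) - t) / δ : ℝ) : ℂ) * aK k u v +
        (((t - lam k) / δ : ℝ) : ℂ) * aK (k + 1) u v) :
    ∀ t ∈ Icc (0 : ℝ) T, ∀ s ∈ Icc (0 : ℝ) T, 2 * δ < |t - s| → ∀ u v : V,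
      ‖aΛ t u v - aΛ s u v‖ ≤ 2 * ω (2 * |t - s|) * ‖u‖ * ‖v‖ := by
  have hlam : ∀ k : ℕ, lam k = (k : ℝ) * δ := by
    intro k
    induction k with
    | zero => simp [hlam0]
    | succ k ih =>
      have h := hunif k
      push_cast
      linarith
  have hXnn : ∀ (u v : V) (r : ℝ), 0 ≤ r → 0 ≤ ω r * ‖u‖ * ‖v‖ := by
    intro u v r hr
    have h := hω r 0 u v
    rw [sub_zero, abs_of_nonneg hr] at h
    exact le_trans (norm_nonneg _) h
  have hKdiff : ∀ (i j : ℕ) (u v : V),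
      ‖aK i u v - aK j u v‖ ≤ ω (|(i : ℝ) - (j : ℝ)| * δ) * ‖u‖ * ‖v‖ := by
    intro i j u v
    set c : ℝ := ((j : ℝ) - (i : ℝ)) * δ with hc
    have h1 : lam i = lam j - c := by rw [hlam, hlam, hc]; ring
    have h2 : lam (i + 1) = lam (j + 1) - c := by rw [hlam, hlam, hc]; push_cast; ring
    have hint2 : IntervalIntegrable (fun r => a (r + c) u v) volume (lam i) (lam (i + 1)) := by
      rw [h1, h2]
      exact (haint j u v).comp_add_right c
    have htrans : (∫ r in lam i..lam (i + 1), a (r + c) u v)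
        = ∫ r in lam j..lam (j + 1), a r u v := by
      rw [intervalIntegral.integral_comp_add_right (fun r => a r u v) c]
      congr 1
      · rw [h1]; ring
      · rw [h2]; ring
    have hC : ∀ r ∈ Set.uIoc (lam i) (lam (i + 1)),
        ‖a r u v - a (r + c) u v‖ ≤ ω (|(i : ℝ) - (j : ℝ)| * δ) * ‖u‖ * ‖v‖ := by
      intro r _
      have h := hω r (r + c) u v
      have habs : |r - (r + c)| = |(i : ℝ) - (j : ℝ)| * δ := by
        rw [show r - (r + c) = -c by ring, abs_neg, hc, abs_mul, abs_of_pos hδ, abs_sub_comm]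
      rwa [habs] at h
    have hIb : ‖∫ r in lam i..lam (i + 1), (a r u v - a (r + c) u v)‖
        ≤ (ω (|(i : ℝ) - (j : ℝ)| * δ) * ‖u‖ * ‖v‖) * |lam (i + 1) - lam i| :=
      intervalIntegral.norm_integral_le_of_norm_le_const hC
    have hlen : |lam (i + 1) - lam i| = δ := by rw [hunif i]; exact abs_of_pos hδ
    rw [hlen] at hIb
    have hsub : aK i u v - aK j u v
        = (δ : ℂ)⁻¹ * ∫ r in lam i..lam (i + 1), (a r u v - a (r + c) u v) := by
      rw [haK i u v, haK j u v, ← htrans, ← mul_sub,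
        ← intervalIntegral.integral_sub (haint i u v) hint2]
    rw [hsub, norm_mul]
    have hnorminv : ‖(δ : ℂ)⁻¹‖ = δ⁻¹ := by
      rw [norm_inv, Complex.norm_real, Real.norm_eq_abs, abs_of_pos hδ]
    rw [hnorminv]
    refine le_trans (mul_le_mul_of_nonneg_left hIb (inv_nonneg.2 hδ.le)) (le_of_eq ?_)
    field_simp
  have hTn : T = ((n : ℝ) + 1) * δ := by
    have h := hlam (n + 1); rw [hlamT] at h; push_cast at h; linarith
  have hfind : ∀ r ∈ Icc (0 : ℝ) T, ∃ k : ℕ, k ≤ n ∧ (k : ℝ) * δ ≤ r ∧ r ≤ ((k : ℝ) + 1) * δ := by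
    intro r hr
    refine ⟨min ⌊r / δ⌋₊ n, min_le_right _ _, ?_, ?_⟩
    · have h1 : (⌊r / δ⌋₊ : ℝ) ≤ r / δ := Nat.floor_le (div_nonneg hr.1 hδ.le)
      have h2 : ((min ⌊r / δ⌋₊ n : ℕ) : ℝ) ≤ (⌊r / δ⌋₊ : ℝ) := by
        exact_mod_cast min_le_left _ _
      have h3 : (⌊r / δ⌋₊ : ℝ) * δ ≤ r := (le_div_iff₀ hδ).1 h1
      nlinarith
    · rcases le_or_gt ⌊r / δ⌋₊ n with hle | hlt
      · rw [min_eq_left hle]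
        have h4 : r / δ < (⌊r / δ⌋₊ : ℝ) + 1 := Nat.lt_floor_add_one _
        have h5 : r < ((⌊r / δ⌋₊ : ℝ) + 1) * δ := by
          rw [← div_lt_iff₀ hδ] at *; linarith
        linarith
      · rw [min_eq_right hlt.le]
        have := hr.2
        linarith [hTn ▸ hr.2]
  have key : ∀ t ∈ Icc (0 : ℝ) T, ∀ s ∈ Icc (0 : ℝ) T, s ≤ t → 2 * δ < t - s → ∀ u v : V,
      ‖aΛ t u v - aΛ s u v‖ ≤ 2 * ω (2 * (t - s)) * ‖u‖ * ‖v‖ := by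
    intro t ht s hs hst hgap u v
    obtain ⟨k, hkn, hk1, hk2⟩ := hfind t ht
    obtain ⟨l, hln, hl1, hl2⟩ := hfind s hs
    have hIcck : t ∈ Icc (lam k) (lam (k + 1)) := by
      constructor <;> rw [hlam] <;> push_cast <;> linarith
    have hIccl : s ∈ Icc (lam l) (lam (l + 1)) := by
      constructor <;> rw [hlam] <;> push_cast <;> linarith
    have hat := haΛ k t hIcck u v
    have has := haΛ l s hIccl u v
    set α : ℝ := (lam (k + 1) - t) / δ with hα
    set β : ℝ := (lam (l + 1) - s) / δ with hβ
    have hα0 : 0 ≤ α := div_nonneg (by linarith [hIcck.2]) hδ.le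
    have hα1 : α ≤ 1 := by
      rw [hα, div_le_one hδ]
      have := hunif k
      linarith [hIcck.1]
    have hβ0 : 0 ≤ β := div_nonneg (by linarith [hIccl.2]) hδ.le
    have hβ1 : β ≤ 1 := by
      rw [hβ, div_le_one hδ]
      have := hunif l
      linarith [hIccl.1]
    have hαc : ((t - lam k) / δ : ℝ) = 1 - α := by
      rw [hα]
      have := hunif k
      field_simp
      linarith
    have hβc : ((s - lam l) / δ : ℝ) = 1 - β := by
      rw [hβ]
      have := hunif l
      field_simp
      linarith
    rw [hαc] at hat
    rw [hβc] at has
    -- index gap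
    have hkl : (l : ℝ) + 2 ≤ (k : ℝ) := by
      have h : ((l : ℕ) : ℝ) + 1 < (k : ℝ) := by nlinarith
      have h' : l + 1 < k := by exact_mod_cast h
      have h'' : l + 2 ≤ k := h'
      exact_mod_cast h''
    have e1 := hKdiff k l u v
    have e2 := hKdiff (k + 1) (l + 1) u v
    have e3 := hKdiff l (l + 1) u v
    rw [abs_of_nonneg (by linarith : (0:ℝ) ≤ (k : ℝ) - l)] at e1
    push_cast at e2 e3
    rw [show ((k : ℝ) + 1 - ((l : ℝ) + 1)) = (k : ℝ) - l by ring,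
      abs_of_nonneg (by linarith : (0:ℝ) ≤ (k : ℝ) - l)] at e2
    rw [show ((l : ℝ) - ((l : ℝ) + 1)) = -1 by ring, abs_neg, abs_one] at e3
    have hd1 : ((k : ℝ) - l) * δ ≤ 2 * (t - s) := by nlinarith
    have hd2 : (1 : ℝ) * δ ≤ 2 * (t - s) := by linarith
    set M : ℝ := ω (2 * (t - s)) * ‖u‖ * ‖v‖ with hM
    have hMnn : 0 ≤ M := hXnn u v _ (by linarith)
    have hE1 : ‖aK k u v - aK l u v‖ ≤ M :=
      e1.trans (mul_le_mul_of_nonneg_right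
        (mul_le_mul_of_nonneg_right (hmono hd1) (norm_nonneg u)) (norm_nonneg v))
    have hE2 : ‖aK (k + 1) u v - aK (l + 1) u v‖ ≤ M :=
      e2.trans (mul_le_mul_of_nonneg_right
        (mul_le_mul_of_nonneg_right (hmono hd1) (norm_nonneg u)) (norm_nonneg v))
    have hE3 : ‖aK l u v - aK (l + 1) u v‖ ≤ M :=
      e3.trans (mul_le_mul_of_nonneg_right
        (mul_le_mul_of_nonneg_right (hmono hd2) (norm_nonneg u)) (norm_nonneg v))
    have hdecomp : aΛ t u v - aΛ s u v
        = ((α : ℝ) : ℂ) * (aK k u v - aK l u v)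
          + (((1 - α : ℝ)) : ℂ) * (aK (k + 1) u v - aK (l + 1) u v)
          + (((α - β : ℝ)) : ℂ) * (aK l u v - aK (l + 1) u v) := by
      rw [hat, has]
      push_cast
      ring
    rw [hdecomp]
    calc ‖((α : ℝ) : ℂ) * (aK k u v - aK l u v)
          + (((1 - α : ℝ)) : ℂ) * (aK (k + 1) u v - aK (l + 1) u v)
          + (((α - β : ℝ)) : ℂ) * (aK l u v - aK (l + 1) u v)‖
        ≤ |α| * ‖aK k u v - aK l u v‖ + |1 - α| * ‖aK (k + 1) u v - aK (l + 1) u v‖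
          + |α - β| * ‖aK l u v - aK (l + 1) u v‖ := by
          refine le_trans norm_add₃_le ?_
          simp only [norm_mul, Complex.norm_real, Real.norm_eq_abs, le_refl]
      _ ≤ α * M + (1 - α) * M + 1 * M := by
          rw [abs_of_nonneg hα0, abs_of_nonneg (by linarith : (0:ℝ) ≤ 1 - α)]
          exact add_le_add (add_le_add
            (mul_le_mul_of_nonneg_left hE1 hα0)
            (mul_le_mul_of_nonneg_left hE2 (by linarith)))
            (mul_le_mul (abs_le.2 ⟨by linarith, by linarith⟩) hE3 (norm_nonneg _) zero_le_one)
      _ = 2 * ω (2 * (t - s)) * ‖u‖ * ‖v‖ := by rw [hM]; ring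
  intro t ht s hs hgap u v
  rcases le_total s t with h | h
  · have habs : |t - s| = t - s := abs_of_nonneg (by linarith)
    rw [habs] at hgap ⊢
    exact key t ht s hs h hgap u v
  · have habs : |t - s| = s - t := by rw [abs_sub_comm]; exact abs_of_nonneg (by linarith)
    rw [habs] at hgap ⊢
    rw [norm_sub_rev]
    exact key s hs t ht h hgap u v
end

section
/- Let a : [0,T] × V × V → ℂ satisfy |a(t;u,v) − a(s;u,v)| ≤ ω(|t−s|)‖u‖‖v‖ with ω non-decreasing, and let a_Λ be the piecewise affine interpolation of the interval averages a_k over a uniform subdivision of mesh |Λ|. Then for every t ∈ [0,T] and u,v ∈ V, |a_Λ(t;u,v) − a(t;u,v)| ≤ 2ω(2|Λ|)‖u‖‖v‖. -/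
open Set MeasureTheory intervalIntegral

/-- The piecewise affine interpolation `a_Λ` of the interval averages of `a` over a uniform
subdivision of mesh `δ` satisfies `|a_Λ(t;u,v) − a(t;u,v)| ≤ 2ω(2δ)‖u‖‖v‖` for all
`t ∈ [0,T]`. -/
theorem stmt9 {V : Type*} [NormedAddCommGroup V] [NormedSpace ℂ V]
    (T δ : ℝ) (hT : 0 < T) (hδ : 0 < δ) (n : ℕ)
    (lam : ℕ → ℝ) (hlam0 : lam 0 = 0) (hlamT : lam (n + 1) = T)
    (hunif : ∀ k, lam (k + 1) - lam k = δ)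
    (a : ℝ → V → V → ℂ)
    (haint : ∀ k (u v : V), IntervalIntegrable (fun r => a r u v) volume (lam k) (lam (k + 1)))
    (ω : ℝ → ℝ) (hmono : Monotone ω)
    (hω : ∀ t s (u v : V), ‖a t u v - a s u v‖ ≤ ω |t - s| * ‖u‖ * ‖v‖)
    (aK : ℕ → V → V → ℂ)
    (haK : ∀ k (u v : V), aK k u v = (δ : ℂ)⁻¹ * ∫ r in lam k..lam (k + 1), a r u v)
    (aΛ : ℝ → V → V → ℂ)
    (haΛ : ∀ k, ∀ t ∈ Icc (lam k) (lam (k + 1)), ∀ u v : V,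
      aΛ t u v = (((lam (k + 1) - t) / δ : ℝ) : ℂ) * aK k u v +
        (((t - lam k) / δ : ℝ) : ℂ) * aK (k + 1) u v) :
    ∀ t ∈ Icc (0 : ℝ) T, ∀ u v : V,
      ‖aΛ t u v - a t u v‖ ≤ 2 * ω (2 * δ) * ‖u‖ * ‖v‖ := by
  intro t ht u v
  have hδC : ‖((δ:ℂ))⁻¹‖ = δ⁻¹ := by
    rw [norm_inv, Complex.norm_real, Real.norm_eq_abs, abs_of_pos hδ]
  -- nonnegativity of the bound
  have hC0 : 0 ≤ ω (2*δ) * ‖u‖ * ‖v‖ := by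
    have h1 := hω t t u v
    simp only [sub_self, norm_zero, abs_zero] at h1
    have h2 : ω 0 ≤ ω (2*δ) := hmono (by positivity)
    exact h1.trans (mul_le_mul_of_nonneg_right (mul_le_mul_of_nonneg_right h2 (norm_nonneg u)) (norm_nonneg v))
  -- key estimate
  have key : ∀ j, (∀ r ∈ Icc (lam j) (lam (j+1)), |r - t| ≤ 2*δ) →
      ‖aK j u v - a t u v‖ ≤ ω (2*δ) * ‖u‖ * ‖v‖ := by
    intro j hj
    have hlen : lam (j+1) - lam j = δ := hunif j
    have hle : lam j ≤ lam (j+1) := by linarith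
    have hδC' : (δ:ℂ) ≠ 0 := by exact_mod_cast hδ.ne'
    have hsub : aK j u v - a t u v
        = (δ:ℂ)⁻¹ * ∫ r in lam j..lam (j+1), (a r u v - a t u v) := by
      rw [intervalIntegral.integral_sub (haint j u v) intervalIntegrable_const,
        intervalIntegral.integral_const, haK]
      rw [Complex.real_smul]
      rw [show ((lam (j+1) - lam j : ℝ) : ℂ) = (δ:ℂ) by exact_mod_cast congrArg Complex.ofReal hlen]
      field_simp
    rw [hsub, norm_mul, hδC]
    have hbd : ‖∫ r in lam j..lam (j+1), (a r u v - a t u v)‖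
        ≤ (ω (2*δ) * ‖u‖ * ‖v‖) * |lam (j+1) - lam j| := by
      apply intervalIntegral.norm_integral_le_of_norm_le_const
      intro r hr
      rw [uIoc_of_le hle] at hr
      have hr' : r ∈ Icc (lam j) (lam (j+1)) := Ioc_subset_Icc_self hr
      calc ‖a r u v - a t u v‖ ≤ ω |r - t| * ‖u‖ * ‖v‖ := hω r t u v
        _ ≤ ω (2*δ) * ‖u‖ * ‖v‖ := by
            exact mul_le_mul_of_nonneg_right (mul_le_mul_of_nonneg_right (hmono (hj r hr')) (norm_nonneg u)) (norm_nonneg v)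
    rw [hlen, abs_of_pos hδ] at hbd
    calc δ⁻¹ * ‖∫ r in lam j..lam (j+1), (a r u v - a t u v)‖
        ≤ δ⁻¹ * ((ω (2*δ) * ‖u‖ * ‖v‖) * δ) := by
          exact mul_le_mul_of_nonneg_left hbd (by positivity)
      _ = ω (2*δ) * ‖u‖ * ‖v‖ := by field_simp
  -- lam formula
  have hlam : ∀ j, lam j = j * δ := by
    intro j; induction j with
    | zero => simpa using hlam0
    | succ m ih =>
      have h := hunif m
      push_cast
      linarith
  -- choose k
  set k : ℕ := min n ⌊t/δ⌋₊ with hkdef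
  have hk1 : lam k ≤ t := by
    rw [hlam]
    have h1 : (k:ℝ) ≤ (⌊t/δ⌋₊ : ℝ) := by exact_mod_cast min_le_right n _
    have h2 : (⌊t/δ⌋₊ : ℝ) ≤ t/δ := Nat.floor_le (div_nonneg ht.1 hδ.le)
    have : (k:ℝ) ≤ t/δ := h1.trans h2
    calc (k:ℝ) * δ ≤ (t/δ) * δ := by nlinarith
      _ = t := by field_simp
  have hk2 : t ≤ lam (k+1) := by
    rcases le_or_gt (⌊t/δ⌋₊) n with h | h
    · have hk : k = ⌊t/δ⌋₊ := min_eq_right h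
      rw [hlam, hk]
      have h2 : t/δ < (⌊t/δ⌋₊ : ℝ) + 1 := Nat.lt_floor_add_one _
      push_cast
      calc t = (t/δ) * δ := by field_simp
        _ ≤ ((⌊t/δ⌋₊ : ℝ) + 1) * δ := by nlinarith
    · have hk : k = n := min_eq_left h.le
      rw [hk, hlamT]; exact ht.2
  have hmem : t ∈ Icc (lam k) (lam (k+1)) := ⟨hk1, hk2⟩
  rw [haΛ k t hmem u v]
  set c1 : ℝ := (lam (k+1) - t)/δ with hc1def
  set c2 : ℝ := (t - lam k)/δ with hc2def
  have hc1 : 0 ≤ c1 := div_nonneg (by linarith) hδ.le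
  have hc2 : 0 ≤ c2 := div_nonneg (by linarith) hδ.le
  have hsum : c1 + c2 = 1 := by
    rw [hc1def, hc2def, ← add_div]
    rw [show lam (k+1) - t + (t - lam k) = lam (k+1) - lam k by ring, hunif k]
    field_simp
  have hcC : (c1:ℂ) + (c2:ℂ) = 1 := by exact_mod_cast hsum
  have heq : (c1:ℂ) * aK k u v + (c2:ℂ) * aK (k+1) u v - a t u v
      = (c1:ℂ) * (aK k u v - a t u v) + (c2:ℂ) * (aK (k+1) u v - a t u v) := by
    linear_combination (a t u v) * hcC
  rw [heq]
  have B1 : ‖aK k u v - a t u v‖ ≤ ω (2*δ) * ‖u‖ * ‖v‖ := by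
    apply key
    intro r hr
    have h1 := hunif k
    rw [abs_le]
    constructor <;> [linarith [hr.1, hr.2]; linarith [hr.1, hr.2]]
  have B2 : ‖aK (k+1) u v - a t u v‖ ≤ ω (2*δ) * ‖u‖ * ‖v‖ := by
    apply key
    intro r hr
    have h1 := hunif k
    have h2 := hunif (k+1)
    rw [abs_le]
    constructor <;> [linarith [hr.1, hr.2]; linarith [hr.1, hr.2]]
  have hn1 : ‖((c1:ℂ))‖ = c1 := by rw [Complex.norm_real, Real.norm_eq_abs, abs_of_nonneg hc1]
  have hn2 : ‖((c2:ℂ))‖ = c2 := by rw [Complex.norm_real, Real.norm_eq_abs, abs_of_nonneg hc2]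
  calc ‖(c1:ℂ) * (aK k u v - a t u v) + (c2:ℂ) * (aK (k+1) u v - a t u v)‖
      ≤ ‖(c1:ℂ) * (aK k u v - a t u v)‖ + ‖(c2:ℂ) * (aK (k+1) u v - a t u v)‖ := norm_add_le _ _
    _ = c1 * ‖aK k u v - a t u v‖ + c2 * ‖aK (k+1) u v - a t u v‖ := by
        rw [norm_mul, norm_mul, hn1, hn2]
    _ ≤ c1 * (ω (2*δ) * ‖u‖ * ‖v‖) + c2 * (ω (2*δ) * ‖u‖ * ‖v‖) :=
        add_le_add (mul_le_mul_of_nonneg_left B1 hc1) (mul_le_mul_of_nonneg_left B2 hc2)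
    _ = ω (2*δ) * ‖u‖ * ‖v‖ := by rw [← add_mul, hsum, one_mul]
    _ ≤ 2 * ω (2*δ) * ‖u‖ * ‖v‖ := by nlinarith
end
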